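/- Let k ≥ 3 be an integer, p a prime, and n > n_0 positive integers. Given functions f_1, ..., f_k : F_p^{n_0} → {0,1} whose tuple is ε-far from k-cycle-freeness, define g_1, ..., g_k : F_p^n → {0,1} by g_j(x, z) = 1 if and only if f_j(x) = 1 and Σ_{i=1}^{n−n_0} z_i = 0, for x ∈ F_p^{n_0} and z ∈ F_p^{n−n_0}. Then the tuple (g_1, ..., g_k) is (ε/p)-far from k-cycle-freeness. -/

import Mathlib

open Finset


lemma aux_pi_sum {α : Type*} [DecidableEq α] [Fintype α] {K : ℕ} (S : Finset α) (i : Fin K)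
    (F : α → ℝ) :
    ∑ t ∈ Fintype.piFinset (fun _ : Fin K => S), F (t i)
      = (∑ z ∈ S, F z) * (S.card : ℝ) ^ (K - 1) := by
  classical
  have h := Finset.prod_univ_sum (fun _ : Fin K => S) (fun a z => if a = i then F z else 1)
  have hR : ∀ t : Fin K → α, (∏ a, if a = i then F (t a) else 1) = F (t i) := by
    intro t
    rw [Finset.prod_eq_single i (fun b _ hb => if_neg hb) (by simp)]
    simp
  have hterm : ∀ b : Fin K, b ≠ i → (∑ z ∈ S, if b = i then F z else 1) = (S.card : ℝ) := by
    intro b hb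
    rw [Finset.sum_congr rfl (fun z _ => if_neg hb)]
    simp
  have hL : (∏ a : Fin K, ∑ z ∈ S, if a = i then F z else 1)
      = (∑ z ∈ S, F z) * (S.card : ℝ) ^ (K - 1) := by
    rw [← Finset.mul_prod_erase Finset.univ
      (fun a => ∑ z ∈ S, if a = i then F z else 1) (Finset.mem_univ i)]
    have h1 : (∑ z ∈ S, if i = i then F z else 1) = ∑ z ∈ S, F z := by simp
    have h2 : (∏ b ∈ Finset.univ.erase i, ∑ z ∈ S, if b = i then F z else 1)
        = (S.card : ℝ) ^ (K - 1) := by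
      rw [Finset.prod_congr rfl (fun b hb => hterm b (Finset.ne_of_mem_erase hb)),
        Finset.prod_const, Finset.card_erase_of_mem (Finset.mem_univ i),
        Finset.card_univ, Fintype.card_fin]
    rw [h1, h2]
  rw [← hL, h, Finset.sum_congr rfl (fun t _ => hR t)]

lemma aux_invol {m K : ℕ} (p : ℕ) (hK : 0 < K)
    (S : Finset (Fin m → ZMod p))
    (hS : ∀ z, z ∈ S ↔ ∑ i, z i = 0) (F : (Fin m → ZMod p) → ℝ) :
    ∑ t ∈ Fintype.piFinset (fun _ : Fin K => S), F (-(∑ i, t i))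
       = ∑ t ∈ Fintype.piFinset (fun _ : Fin K => S), F (t ⟨0, hK⟩) := by
  classical
  set i₀ : Fin K := ⟨0, hK⟩
  set ψ : (Fin K → Fin m → ZMod p) → (Fin K → Fin m → ZMod p) :=
    fun t => Function.update t i₀ (-(∑ i, t i)) with hψ
  have hsum0 : ∀ t : Fin K → Fin m → ZMod p, (∀ i, t i ∈ S) → (-(∑ i, t i)) ∈ S := by
    intro t ht
    rw [hS]
    have h0 : ∀ j, (∑ i, t i) j = ∑ i, t i j := fun j => Finset.sum_apply j _ _
    have hz : ∀ i, ∑ x, (t i) x = 0 := fun i => (hS (t i)).mp (ht i)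
    simp only [Pi.neg_apply, h0]
    rw [Finset.sum_neg_distrib, Finset.sum_comm]
    simp [hz]
  have hmem : ∀ t ∈ Fintype.piFinset (fun _ : Fin K => S),
      ψ t ∈ Fintype.piFinset (fun _ : Fin K => S) := by
    intro t ht
    rw [Fintype.mem_piFinset] at ht ⊢
    intro i
    by_cases hi : i = i₀
    · subst hi; rw [hψ]; simp only [Function.update_self]
      exact hsum0 t ht
    · rw [hψ]; simp only [Function.update_of_ne hi]; exact ht i
  have hinv : ∀ t : Fin K → Fin m → ZMod p, ψ (ψ t) = t := by
    intro t
    funext i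
    by_cases hi : i = i₀
    · subst hi
      show Function.update (ψ t) i₀ (-(∑ i, ψ t i)) i₀ = t i₀
      rw [Function.update_self]
      have h1 : ∑ i, ψ t i = -(t i₀) := by
        rw [hψ]
        simp only
        rw [Finset.sum_update_of_mem (Finset.mem_univ i₀)]
        have h2 : ∑ x ∈ Finset.univ \ {i₀}, t x = (∑ i, t i) - t i₀ := by
          rw [Finset.sum_sdiff_eq_sub (Finset.singleton_subset_iff.mpr (Finset.mem_univ i₀))]
          simp
        rw [h2]; abel
      rw [h1, neg_neg]
    · simp [hψ, Function.update_of_ne hi]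
  refine Finset.sum_nbij' ψ ψ hmem hmem (fun a _ => hinv a) (fun a _ => hinv a) ?_
  intro t _
  exact congrArg F (Function.update_self i₀ (-(∑ i, t i)) t).symm

lemma aux_fiber {A B : Type*} [Fintype A] [Fintype B] [DecidableEq A] [DecidableEq B]
    (Q : A × B → Prop) [DecidablePred Q] (T : Finset B) :
    ∑ z ∈ T, (Finset.univ.filter (fun v : A => Q (v, z))).card
      ≤ (Finset.univ.filter Q).card := by
  have h := Finset.card_eq_sum_card_fiberwise
    (f := Prod.snd) (s := Finset.univ.filter Q) (t := Finset.univ) (fun x _ => Finset.mem_univ _)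
  rw [h]
  have heq : ∀ z : B, (Finset.univ.filter (fun v : A => Q (v, z))).card
      = ((Finset.univ.filter Q).filter (fun w => w.2 = z)).card := by
    intro z
    apply Finset.card_nbij' (fun v => ((v, z) : A × B)) (fun w => w.1)
    · intro v hv
      replace hv : v ∈ Finset.univ.filter (fun v : A => Q (v, z)) := hv
      simp only [Finset.mem_filter, Finset.mem_univ, true_and] at hv
      show (v, z) ∈ (Finset.univ.filter Q).filter (fun w => w.2 = z)
      simp [hv]
    · intro w hw
      replace hw : w ∈ (Finset.univ.filter Q).filter (fun w => w.2 = z) := hw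
      show w.1 ∈ Finset.univ.filter (fun v : A => Q (v, z))
      simp only [Finset.mem_filter, Finset.mem_univ, true_and] at hw ⊢
      obtain ⟨hQ, hz⟩ := hw
      rw [show ((w.1 : A), z) = w by rw [← hz]]
      exact hQ
    · intro v _; rfl
    · intro w hw
      replace hw : w ∈ (Finset.univ.filter Q).filter (fun w => w.2 = z) := hw
      simp only [Finset.mem_filter] at hw
      rw [← hw.2]
  calc ∑ z ∈ T, (Finset.univ.filter (fun v : A => Q (v, z))).card
      ≤ ∑ z ∈ Finset.univ, (Finset.univ.filter (fun v : A => Q (v, z))).card :=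
        Finset.sum_le_sum_of_subset (Finset.subset_univ T)
    _ = _ := Finset.sum_congr rfl (fun z _ => heq z)

lemma aux_card (p : ℕ) [Fact p.Prime] (m : ℕ) (hm : 1 ≤ m) :
    p ^ (m - 1) ≤ (Finset.univ.filter (fun z : Fin m → ZMod p => ∑ i, z i = 0)).card := by
  obtain ⟨m', rfl⟩ : ∃ m', m = m' + 1 := ⟨m - 1, by omega⟩
  simp only [Nat.add_sub_cancel]
  set φ : (Fin m' → ZMod p) → (Fin (m' + 1) → ZMod p) :=
    fun t => Fin.snoc t (-(∑ i, t i)) with hφ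
  have hmaps : ∀ t : Fin m' → ZMod p,
      φ t ∈ Finset.univ.filter (fun z : Fin (m'+1) → ZMod p => ∑ i, z i = 0) := by
    intro t
    simp only [Finset.mem_filter, Finset.mem_univ, true_and]
    rw [Fin.sum_univ_castSucc]
    simp [hφ]
  have hinj : Function.Injective φ := by
    intro a b hab
    funext i
    have := congrFun hab i.castSucc
    simpa [hφ] using this
  have hle := Finset.card_le_card_of_injOn (s := (Finset.univ : Finset (Fin m' → ZMod p)))
    φ (fun t _ => hmaps t) (hinj.injOn)
  calc p ^ m' = (Finset.univ : Finset (Fin m' → ZMod p)).card := by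
        rw [Finset.card_univ, Fintype.card_fun, ZMod.card, Fintype.card_fin]
    _ ≤ _ := hle



/-- Let `k ≥ 3`, `p` prime, `n > n₀ ≥ 1`. Given
`f_1, ..., f_k : F_p^{n₀} → {0,1}` whose tuple is `ε`-far from
`k`-cycle-freeness, define `g_j : F_p^n → {0,1}` by `g_j(x, z) = 1` iff
`f_j(x) = 1` and `∑ z_i = 0`. Then `(g_1, ..., g_k)` is `(ε/p)`-far from
`k`-cycle-freeness. -/
theorem stmt_16 (k p n n₀ : ℕ) [Fact p.Prime] (hk : 3 ≤ k)
    (hn₀ : 1 ≤ n₀) (hn : n₀ < n)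
    (f : Fin k → (Fin n₀ → ZMod p) → Bool) (ε : ℝ)
    (hfar : ∀ g : Fin k → (Fin n₀ → ZMod p) → Bool,
      (¬ ∃ x : Fin k → Fin n₀ → ZMod p, (∑ j, x j = 0) ∧ ∀ j, g j (x j) = true) →
      ε ≤ ∑ j, ((Finset.univ.filter fun v => f j v ≠ g j v).card : ℝ) / (p ^ n₀ : ℝ))
    (g : Fin k → ((Fin n₀ → ZMod p) × (Fin (n - n₀) → ZMod p)) → Bool)
    (hg : ∀ (j : Fin k) (x : Fin n₀ → ZMod p) (z : Fin (n - n₀) → ZMod p),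
      g j (x, z) = true ↔ (f j x = true ∧ ∑ i, z i = 0)) :
    ∀ G : Fin k → ((Fin n₀ → ZMod p) × (Fin (n - n₀) → ZMod p)) → Bool,
      (¬ ∃ x : Fin k → ((Fin n₀ → ZMod p) × (Fin (n - n₀) → ZMod p)),
        (∑ j, x j = 0) ∧ ∀ j, G j (x j) = true) →
      ε / (p : ℝ) ≤
        ∑ j, ((Finset.univ.filter fun w => g j w ≠ G j w).card : ℝ) / (p ^ n : ℝ) := by
  intro G hGfree
  obtain ⟨K, rfl⟩ : ∃ K, k = K + 1 := ⟨k - 1, by omega⟩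
  have hK : 0 < K := by omega
  have hp0 : (0:ℝ) < p := by exact_mod_cast (Fact.out : p.Prime).pos
  have hpn₀ : (0:ℝ) < (p:ℝ)^n₀ := pow_pos hp0 n₀
  set S : Finset (Fin (n - n₀) → ZMod p) :=
    Finset.univ.filter (fun z => ∑ i, z i = 0) with hSdef
  have hSmem : ∀ z, z ∈ S ↔ ∑ i, z i = 0 := by intro z; simp [hSdef]
  set P := Fintype.piFinset (fun _ : Fin K => S) with hPdef
  set c : Fin (K+1) → (Fin (n - n₀) → ZMod p) → ℝ :=
    fun j z => ((Finset.univ.filter fun v => g j (v, z) ≠ G j (v, z)).card : ℝ) with hcdef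
  set w : (Fin K → Fin (n - n₀) → ZMod p) → Fin (K+1) → (Fin (n - n₀) → ZMod p) :=
    fun t => Fin.snoc t (-(∑ i, t i)) with hwdef
  have hneg : ∀ t : Fin K → Fin (n - n₀) → ZMod p, (∀ i, t i ∈ S) → (-(∑ i, t i)) ∈ S := by
    intro t ht
    rw [hSmem]
    have h0 : ∀ j, (∑ i, t i) j = ∑ i, t i j := fun j => Finset.sum_apply j _ _
    have hz : ∀ i, ∑ x, (t i) x = 0 := fun i => (hSmem (t i)).mp (ht i)
    simp only [Pi.neg_apply, h0]
    rw [Finset.sum_neg_distrib, Finset.sum_comm]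
    simp [hz]
  have hwS : ∀ t ∈ P, ∀ j, w t j ∈ S := by
    intro t ht j
    rw [hPdef, Fintype.mem_piFinset] at ht
    refine Fin.lastCases ?_ ?_ j
    · rw [hwdef]; simp only [Fin.snoc_last]
      exact hneg t ht
    · intro i; rw [hwdef]; simp only [Fin.snoc_castSucc]; exact ht i
  have hwsum : ∀ t : Fin K → Fin (n - n₀) → ZMod p, ∑ j, w t j = 0 := by
    intro t
    rw [hwdef]
    simp only
    rw [Fin.sum_univ_castSucc]
    simp
  have key : ∀ t ∈ P, ε * (p:ℝ)^n₀ ≤ ∑ j, c j (w t j) := by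
    intro t ht
    have hfree : ¬ ∃ x : Fin (K+1) → Fin n₀ → ZMod p,
        (∑ j, x j = 0) ∧ ∀ j, (fun j x => G j (x, w t j)) j (x j) = true := by
      rintro ⟨x, hx0, hx1⟩
      apply hGfree
      refine ⟨fun j => (x j, w t j), ?_, hx1⟩
      have hfst := Prod.fst_sum (s := Finset.univ)
        (f := fun j : Fin (K+1) => ((x j, w t j) : (Fin n₀ → ZMod p) × (Fin (n-n₀) → ZMod p)))
      have hsnd := Prod.snd_sum (s := Finset.univ)
        (f := fun j : Fin (K+1) => ((x j, w t j) : (Fin n₀ → ZMod p) × (Fin (n-n₀) → ZMod p)))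
      rw [Prod.ext_iff]
      constructor
      · rw [hfst]; simpa using hx0
      · rw [hsnd]; simpa using hwsum t
    have h2 := hfar (fun j x => G j (x, w t j)) hfree
    have h3 : ∀ j : Fin (K+1), (Finset.univ.filter fun v => f j v ≠ G j (v, w t j)).card
        = (Finset.univ.filter fun v => g j (v, w t j) ≠ G j (v, w t j)).card := by
      intro j
      congr 1
      apply Finset.filter_congr
      intro v _
      have hgz : g j (v, w t j) = f j v := by
        rw [Bool.eq_iff_iff, hg]
        have := (hSmem (w t j)).mp (hwS t ht j)
        tauto
      rw [hgz]
    simp only [h3, ← Finset.sum_div, hcdef] at h2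
    exact (le_div_iff₀ hpn₀).mp h2
  have hcardP : (P.card : ℝ) = (S.card : ℝ)^K := by
    rw [hPdef, Fintype.card_piFinset]
    push_cast
    simp
  have hsumP : ε * (p:ℝ)^n₀ * (S.card:ℝ)^K ≤ ∑ t ∈ P, ∑ j, c j (w t j) := by
    calc ε * (p:ℝ)^n₀ * (S.card:ℝ)^K = ∑ t ∈ P, ε * (p:ℝ)^n₀ := by
          rw [Finset.sum_const, nsmul_eq_mul, hcardP]; ring
      _ ≤ _ := Finset.sum_le_sum key
  have hcol : ∀ j : Fin (K+1), ∑ t ∈ P, c j (w t j) = (∑ z ∈ S, c j z) * (S.card:ℝ)^(K-1) := by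
    intro j
    refine Fin.lastCases ?_ ?_ j
    · have h1 : ∑ t ∈ P, c (Fin.last K) (w t (Fin.last K))
          = ∑ t ∈ P, c (Fin.last K) (-(∑ i, t i)) :=
        Finset.sum_congr rfl (fun t _ => by rw [hwdef]; simp [Fin.snoc_last])
      rw [h1, hPdef, aux_invol p hK S hSmem, aux_pi_sum]
    · intro i
      have h1 : ∑ t ∈ P, c i.castSucc (w t i.castSucc) = ∑ t ∈ P, c i.castSucc (t i) :=
        Finset.sum_congr rfl (fun t _ => by rw [hwdef]; simp [Fin.snoc_castSucc])
      rw [h1, hPdef, aux_pi_sum]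
  set D : Fin (K+1) → ℝ :=
    fun j => ((Finset.univ.filter fun w => g j w ≠ G j w).card : ℝ) with hDdef
  have hD : ∀ j, ∑ z ∈ S, c j z ≤ D j := by
    intro j
    have hnat := aux_fiber
      (Q := fun w : (Fin n₀ → ZMod p) × (Fin (n-n₀) → ZMod p) => g j w ≠ G j w) S
    rw [hcdef, hDdef]
    push_cast [← Nat.cast_sum]
    exact_mod_cast hnat
  set A : ℝ := ∑ j, D j with hAdef
  have hA0 : 0 ≤ A := Finset.sum_nonneg (fun j _ => by rw [hDdef]; positivity)
  have hmain : ε * (p:ℝ)^n₀ * (S.card:ℝ)^K ≤ A * (S.card:ℝ)^(K-1) := by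
    calc ε * (p:ℝ)^n₀ * (S.card:ℝ)^K ≤ ∑ t ∈ P, ∑ j, c j (w t j) := hsumP
      _ = ∑ j, ∑ t ∈ P, c j (w t j) := Finset.sum_comm
      _ = ∑ j, (∑ z ∈ S, c j z) * (S.card:ℝ)^(K-1) :=
          Finset.sum_congr rfl (fun j _ => hcol j)
      _ ≤ ∑ j, D j * (S.card:ℝ)^(K-1) := by
          refine Finset.sum_le_sum (fun j _ => ?_)
          exact mul_le_mul_of_nonneg_right (hD j) (by positivity)
      _ = A * (S.card:ℝ)^(K-1) := by rw [hAdef, Finset.sum_mul]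
  -- card bounds
  have hm1 : 1 ≤ n - n₀ := by omega
  have hslb : (p:ℝ)^(n - n₀ - 1) ≤ (S.card : ℝ) := by
    have := aux_card p (n - n₀) hm1
    rw [hSdef]
    exact_mod_cast this
  have hs0 : (0:ℝ) < (S.card : ℝ) := lt_of_lt_of_le (by positivity) hslb
  -- divide by s^(K-1)
  have hstep : ε * ((p:ℝ)^n₀ * (S.card:ℝ)) ≤ A := by
    have hexp : (S.card:ℝ)^K = (S.card:ℝ)^(K-1) * (S.card:ℝ) := by
      rw [← pow_succ]; congr 1; omega
    have h := hmain
    rw [hexp] at h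
    have := le_of_mul_le_mul_right (a := (S.card:ℝ)^(K-1))
      (by calc ε * ((p:ℝ)^n₀ * (S.card:ℝ)) * (S.card:ℝ)^(K-1)
            = ε * (p:ℝ)^n₀ * ((S.card:ℝ)^(K-1) * (S.card:ℝ)) := by ring
        _ ≤ A * (S.card:ℝ)^(K-1) := h) (by positivity)
    exact this
  have hfinal : ε ≤ A / (p:ℝ)^(n-1) := by
    have h1 : ε ≤ A / ((p:ℝ)^n₀ * (S.card:ℝ)) := (le_div_iff₀ (by positivity)).mpr hstep
    have h2 : A / ((p:ℝ)^n₀ * (S.card:ℝ)) ≤ A / ((p:ℝ)^n₀ * (p:ℝ)^(n - n₀ - 1)) := by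
      apply div_le_div_of_nonneg_left hA0 (by positivity)
      exact mul_le_mul_of_nonneg_left hslb (by positivity)
    have h3 : (p:ℝ)^n₀ * (p:ℝ)^(n - n₀ - 1) = (p:ℝ)^(n-1) := by
      rw [← pow_add]; congr 1; omega
    rw [h3] at h2
    exact h1.trans h2
  have h5 : ε * (p:ℝ)^(n-1) ≤ A := (le_div_iff₀ (pow_pos hp0 _)).mp hfinal
  have hgoal : ∑ j : Fin (K+1),
      ((Finset.univ.filter fun w => g j w ≠ G j w).card : ℝ) / (p ^ n : ℝ)
      = A / (p:ℝ)^n := by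
    rw [hAdef, ← Finset.sum_div]
  rw [hgoal, div_le_div_iff₀ hp0 (pow_pos hp0 n)]
  calc ε * (p:ℝ)^n = (ε * (p:ℝ)^(n-1)) * p := by
        rw [mul_assoc, ← pow_succ]; congr 2; omega
    _ ≤ A * p := mul_le_mul_of_nonneg_right h5 hp0.le
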